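/- Let M > 0 and let F_D : ℝ → ℝ be continuous and strictly increasing on [0, M]. Assume h ≥ 0, r − c > 0, θ + c > 0, and let w be a real number. For each n, let F_{1,n}, F_{2,n} : ℝ → ℝ be functions and let q_n, q′_n ∈ [0, M] satisfy the optimality equations (θ + c) F_{1,n}(q_n) = (h + r − c)(1 − F_D(q_n)) − h − (θ + c) w and (θ + c) F_{2,n}(q′_n) = (h + r − c)(1 − F_D(q′_n)) − h − (θ + c) w. Then q_n − q′_n → 0 as n → ∞ if and only if F_{1,n}(q_n) − F_{2,n}(q′_n) → 0 as n → ∞. -/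

import Mathlib

open Filter Topology

private lemma aux_extract (f : ℕ → ℝ) (hf : ¬ Filter.Tendsto f Filter.atTop (nhds 0)) :
    ∃ ε > 0, ∃ φ : ℕ → ℕ, StrictMono φ ∧ ∀ n, ε ≤ |f (φ n)| := by
  rw [Metric.tendsto_atTop] at hf
  push_neg at hf
  obtain ⟨ε, hε, hmain⟩ := hf
  have hfreq : ∃ᶠ n in atTop, ε ≤ |f n| := by
    rw [Filter.frequently_atTop]
    intro N
    obtain ⟨n, hn, h'⟩ := hmain N
    exact ⟨n, hn, by simpa [Real.dist_eq] using h'⟩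
  obtain ⟨φ, hφ, h2⟩ := Filter.extraction_of_frequently_atTop hfreq
  exact ⟨ε, hε, φ, hφ, h2⟩

private lemma aux_key (M : ℝ) (FD : ℝ → ℝ)
    (hFD_cont : ContinuousOn FD (Set.Icc 0 M))
    (hFD_strict : StrictMonoOn FD (Set.Icc 0 M))
    (x y : ℕ → ℝ) (hx : ∀ n, x n ∈ Set.Icc 0 M) (hy : ∀ n, y n ∈ Set.Icc 0 M) :
    Filter.Tendsto (fun n => x n - y n) Filter.atTop (nhds 0) ↔
    Filter.Tendsto (fun n => FD (x n) - FD (y n)) Filter.atTop (nhds 0) := by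
  have hcompact : IsCompact (Set.Icc (0:ℝ) M) := isCompact_Icc
  -- common subsequence extraction
  have extract : ∀ φ : ℕ → ℕ, StrictMono φ → ∃ a ∈ Set.Icc (0:ℝ) M, ∃ b ∈ Set.Icc (0:ℝ) M,
      ∃ ψ : ℕ → ℕ, StrictMono ψ ∧
      Filter.Tendsto (fun n => x (φ (ψ n))) Filter.atTop (nhds a) ∧
      Filter.Tendsto (fun n => y (φ (ψ n))) Filter.atTop (nhds b) := by
    intro φ hφ
    obtain ⟨a, ha, ψ₁, hψ₁, hxa⟩ := hcompact.tendsto_subseq (fun n => hx (φ n))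
    obtain ⟨b, hb, ψ₂, hψ₂, hyb⟩ := hcompact.tendsto_subseq
      (fun n => hy (φ (ψ₁ n)))
    refine ⟨a, ha, b, hb, ψ₁ ∘ ψ₂, hψ₁.comp hψ₂, ?_, hyb⟩
    exact hxa.comp hψ₂.tendsto_atTop
  have contFD : ∀ (z : ℕ → ℝ), (∀ n, z n ∈ Set.Icc (0:ℝ) M) → ∀ a ∈ Set.Icc (0:ℝ) M,
      Filter.Tendsto z Filter.atTop (nhds a) →
      Filter.Tendsto (fun n => FD (z n)) Filter.atTop (nhds (FD a)) := by
    intro z hz a ha hconv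
    exact (hFD_cont a ha).tendsto.comp
      (tendsto_nhdsWithin_iff.2 ⟨hconv, Filter.Eventually.of_forall hz⟩)
  constructor
  · intro hxy
    by_contra hcon
    obtain ⟨ε, hε, φ, hφ, hsep⟩ := aux_extract _ hcon
    obtain ⟨a, ha, b, hb, ψ, hψ, hxa, hyb⟩ := extract φ hφ
    have hdiff : Filter.Tendsto (fun n => x (φ (ψ n)) - y (φ (ψ n))) Filter.atTop (nhds (a - b)) :=
      hxa.sub hyb
    have hdiff0 : Filter.Tendsto (fun n => x (φ (ψ n)) - y (φ (ψ n))) Filter.atTop (nhds 0) :=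
      hxy.comp (hφ.comp hψ).tendsto_atTop
    have hab : a = b := by
      have := tendsto_nhds_unique hdiff hdiff0
      linarith [this]
    have hFdiff : Filter.Tendsto (fun n => FD (x (φ (ψ n))) - FD (y (φ (ψ n))))
        Filter.atTop (nhds 0) := by
      have h1 := contFD (fun n => x (φ (ψ n))) (fun n => hx _) a ha hxa
      have h2 := contFD (fun n => y (φ (ψ n))) (fun n => hy _) b hb hyb
      have := h1.sub h2
      rw [hab] at this
      simpa using this
    have := hFdiff.abs
    rw [abs_zero] at this
    have hlt := (Metric.tendsto_atTop.1 this) ε hε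
    obtain ⟨N, hN⟩ := hlt
    have := hN N le_rfl
    rw [Real.dist_eq, sub_zero] at this
    have h2 := hsep (ψ N)
    have : |FD (x (φ (ψ N))) - FD (y (φ (ψ N)))| < ε := lt_of_abs_lt (by simpa using this)
    linarith
  · intro hFxy
    by_contra hcon
    obtain ⟨ε, hε, φ, hφ, hsep⟩ := aux_extract _ hcon
    obtain ⟨a, ha, b, hb, ψ, hψ, hxa, hyb⟩ := extract φ hφ
    have h1 := contFD (fun n => x (φ (ψ n))) (fun n => hx _) a ha hxa
    have h2 := contFD (fun n => y (φ (ψ n))) (fun n => hy _) b hb hyb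
    have hFdiff : Filter.Tendsto (fun n => FD (x (φ (ψ n))) - FD (y (φ (ψ n))))
        Filter.atTop (nhds (FD a - FD b)) := h1.sub h2
    have hFdiff0 : Filter.Tendsto (fun n => FD (x (φ (ψ n))) - FD (y (φ (ψ n))))
        Filter.atTop (nhds 0) := hFxy.comp (hφ.comp hψ).tendsto_atTop
    have hFab : FD a = FD b := by
      have := tendsto_nhds_unique hFdiff hFdiff0
      linarith
    have hab : a = b := hFD_strict.injOn ha hb hFab
    have hdiff : Filter.Tendsto (fun n => x (φ (ψ n)) - y (φ (ψ n))) Filter.atTop (nhds 0) := by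
      have := hxa.sub hyb
      rw [hab] at this
      simpa using this
    obtain ⟨N, hN⟩ := (Metric.tendsto_atTop.1 hdiff) ε hε
    have := hN N le_rfl
    rw [Real.dist_eq, sub_zero] at this
    have h2 := hsep (ψ N)
    linarith [abs_nonneg (x (φ (ψ N)) - y (φ (ψ N)))]


/-- Let M > 0 and F_D be continuous and strictly increasing on [0, M]. If
q_n, q′_n ∈ [0, M] satisfy the optimality equations
(θ + c) F_{1,n}(q_n) = (h + r − c)(1 − F_D(q_n)) − h − (θ + c) w and
(θ + c) F_{2,n}(q′_n) = (h + r − c)(1 − F_D(q′_n)) − h − (θ + c) w, then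
q_n − q′_n → 0 if and only if F_{1,n}(q_n) − F_{2,n}(q′_n) → 0. -/
theorem stmt_17 (M : ℝ) (hM : 0 < M)
    (FD : ℝ → ℝ)
    (hFD_cont : ContinuousOn FD (Set.Icc 0 M))
    (hFD_strict : StrictMonoOn FD (Set.Icc 0 M))
    (h r c θ w : ℝ) (hh : 0 ≤ h) (hrc : 0 < r - c) (hθc : 0 < θ + c)
    (F1 F2 : ℕ → ℝ → ℝ) (q q' : ℕ → ℝ)
    (hq : ∀ n, q n ∈ Set.Icc 0 M) (hq' : ∀ n, q' n ∈ Set.Icc 0 M)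
    (heq1 : ∀ n, (θ + c) * F1 n (q n) = (h + r - c) * (1 - FD (q n)) - h - (θ + c) * w)
    (heq2 : ∀ n, (θ + c) * F2 n (q' n) = (h + r - c) * (1 - FD (q' n)) - h - (θ + c) * w) :
    Filter.Tendsto (fun n => q n - q' n) Filter.atTop (nhds 0) ↔
    Filter.Tendsto (fun n => F1 n (q n) - F2 n (q' n)) Filter.atTop (nhds 0) := by
  set k : ℝ := (h + r - c) / (θ + c) with hk
  have hkpos : 0 < k := div_pos (by linarith) hθc
  have hrel : ∀ n, F1 n (q n) - F2 n (q' n) = k * (FD (q' n) - FD (q n)) := by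
    intro n
    have h1 := heq1 n
    have h2 := heq2 n
    have : (θ + c) * (F1 n (q n) - F2 n (q' n)) = (h + r - c) * (FD (q' n) - FD (q n)) := by
      ring_nf
      ring_nf at h1 h2
      linarith
    field_simp [hk]
    rw [hk, div_mul_eq_mul_div, eq_div_iff hθc.ne']
    linear_combination this
  have hkey := aux_key M FD hFD_cont hFD_strict q q' hq hq'
  rw [hkey]
  constructor
  · intro hF
    have : Filter.Tendsto (fun n => k * (FD (q' n) - FD (q n))) Filter.atTop (nhds (k * 0)) := by
      apply Filter.Tendsto.const_mul
      have := hF.neg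
      simpa using this
    rw [mul_zero] at this
    exact this.congr (fun n => (hrel n).symm)
  · intro hF
    have hF' : Filter.Tendsto (fun n => k * (FD (q' n) - FD (q n))) Filter.atTop (nhds 0) :=
      hF.congr hrel
    have : Filter.Tendsto (fun n => k⁻¹ * (k * (FD (q' n) - FD (q n)))) Filter.atTop
        (nhds (k⁻¹ * 0)) := hF'.const_mul _
    rw [mul_zero] at this
    have heq : ∀ n, k⁻¹ * (k * (FD (q' n) - FD (q n))) = FD (q' n) - FD (q n) := by
      intro n
      rw [← mul_assoc, inv_mul_cancel₀ hkpos.ne', one_mul]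
    have h2 := this.congr heq
    have := h2.neg
    simpa using this
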